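/- In the A_{2n}^{(2)} perfect crystal B of level l, with indices i_a = a-1 for 1 ≤ a ≤ n+1 and i_a = 2n+1-a for n+2 ≤ a ≤ 2n, the recursively defined sets B_0 = {(0,...,0)}, B_a = ⋃_{m≥0} f_{i_a}^m B_{a-1} \ {0} satisfy: B_a = {(x_1,...,x_a,0,...,0)} for 1 ≤ a ≤ n, B_{n+a} = {(x_1,...,x_n,\bar{x}_n,...,\bar{x}_{n-a+1},0,...,0)} for 1 ≤ a ≤ n-1, and B_{2n} = B. -/

import Mathlib

/- The perfect crystal B of level l for A_{2n}^{(2)}: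
   elements (x_1,…,x_n,x̄_n,…,x̄_1) with x_i, x̄_i ≥ 0 and Σ (x_i + x̄_i) ≤ l.
   We encode an element as a pair of ℕ-indexed integer functions
   supported on 1..n. -/
structure AElt where
  x : ℕ → ℤ
  xb : ℕ → ℤ

namespace AElt

def sumA (n : ℕ) (b : AElt) : ℤ := ∑ i ∈ Finset.Icc 1 n, (b.x i + b.xb i)

/-- membership in the level `l` perfect crystal `B` for `A_{2n}^{(2)}` -/
def mem (n l : ℕ) (b : AElt) : Prop :=
  (∀ i, 0 ≤ b.x i) ∧ (∀ i, 0 ≤ b.xb i) ∧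
  (∀ i, i = 0 ∨ n < i → b.x i = 0 ∧ b.xb i = 0) ∧
  sumA n b ≤ l

/-- the Kashiwara operator `f_0` -/
def f0 (b : AElt) : AElt :=
  if b.xb 1 ≤ b.x 1 then ⟨Function.update b.x 1 (b.x 1 + 1), b.xb⟩
  else ⟨b.x, Function.update b.xb 1 (b.xb 1 - 1)⟩

/-- the Kashiwara operator `f_i`, `1 ≤ i ≤ n-1` -/
def fmid (i : ℕ) (b : AElt) : AElt :=
  if b.xb (i+1) ≤ b.x (i+1) then
    ⟨Function.update (Function.update b.x i (b.x i - 1)) (i+1) (b.x (i+1) + 1), b.xb⟩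
  else
    ⟨b.x, Function.update (Function.update b.xb (i+1) (b.xb (i+1) - 1)) i (b.xb i + 1)⟩

/-- the Kashiwara operator `f_n` -/
def flast (n : ℕ) (b : AElt) : AElt :=
  ⟨Function.update b.x n (b.x n - 1), Function.update b.xb n (b.xb n + 1)⟩

/-- the Kashiwara operator `f_i`, `0 ≤ i ≤ n` -/
def f (n i : ℕ) (b : AElt) : AElt :=
  if i = 0 then f0 b else if i = n then flast n b else fmid i b

/-- `φ_i(b)`; `f_i b` is defined exactly when `φ_i(b) > 0` -/
def phi (n l i : ℕ) (b : AElt) : ℤ :=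
  if i = 0 then (l : ℤ) - sumA n b + 2 * max (b.xb 1 - b.x 1) 0
  else if i = n then b.x n
  else b.x i + max (b.xb (i+1) - b.x (i+1)) 0

/-- `ε_i(b)` for the `A_{2n}^{(2)}` perfect crystal -/
def eps (n l i : ℕ) (b : AElt) : ℤ :=
  if i = 0 then (l : ℤ) - sumA n b + 2 * max (b.x 1 - b.xb 1) 0
  else if i = n then b.xb n
  else b.xb i + max (b.x (i+1) - b.xb (i+1)) 0

end AElt

namespace AElt

/-- the index sequence `i_a = a-1` for `1 ≤ a ≤ n+1`, `i_a = 2n+1-a` for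
`n+2 ≤ a ≤ 2n` -/
def idx (n a : ℕ) : ℕ := if a ≤ n + 1 then a - 1 else 2 * n + 1 - a

/-- the ground-state element `(0,…,0)` -/
def bzero : AElt := ⟨fun _ => 0, fun _ => 0⟩

/-- the recursively defined sets `B_0 = {(0,…,0)}`,
`B_a = ⋃_{m ≥ 0} f_{i_a}^m B_{a-1} \ {0}`. -/
def BSet (n l : ℕ) : ℕ → Set AElt
  | 0 => {bzero}
  | a + 1 => {c | ∃ b ∈ BSet n l a, ∃ m : ℕ,
      (∀ k < m, 0 < phi n l (idx n (a+1)) ((f n (idx n (a+1)))^[k] b)) ∧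
      c = (f n (idx n (a+1)))^[m] b}

end AElt

namespace A2n2aux
open AElt

@[ext] lemma AElt.ext' {a b : AElt} (hx : a.x = b.x) (hxb : a.xb = b.xb) : a = b := by
  cases a; cases b; simp_all

@[simp] lemma mk_x (u v : ℕ → ℤ) : (⟨u, v⟩ : AElt).x = u := rfl
@[simp] lemma mk_xb (u v : ℕ → ℤ) : (⟨u, v⟩ : AElt).xb = v := rfl

lemma sum_update1 {n : ℕ} (g : ℕ → ℤ) {i : ℕ} (hi : i ∈ Finset.Icc 1 n) (u : ℤ) :
    ∑ k ∈ Finset.Icc 1 n, Function.update g i u k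
      = (∑ k ∈ Finset.Icc 1 n, g k) + (u - g i) := by
  rw [Finset.sum_update_of_mem hi, Finset.sdiff_singleton_eq_erase,
    ← Finset.add_sum_erase _ g hi]
  ring

lemma sum_update2 {n : ℕ} (g : ℕ → ℤ) {i j : ℕ} (hij : j ≠ i)
    (hi : i ∈ Finset.Icc 1 n) (hj : j ∈ Finset.Icc 1 n) (u v : ℤ) :
    ∑ k ∈ Finset.Icc 1 n, (Function.update (Function.update g i u) j v) k
      = (∑ k ∈ Finset.Icc 1 n, g k) + (u - g i) + (v - g j) := by
  rw [sum_update1 _ hj, sum_update1 _ hi, Function.update_apply, if_neg hij]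

lemma sumA_split (n : ℕ) (b : AElt) :
    sumA n b = (∑ k ∈ Finset.Icc 1 n, b.x k) + ∑ k ∈ Finset.Icc 1 n, b.xb k := by
  unfold sumA; rw [Finset.sum_add_distrib]

lemma f0_iter (m : ℕ) (b : AElt) (h : b.xb 1 ≤ b.x 1) :
    f0^[m] b = ⟨Function.update b.x 1 (b.x 1 + m), b.xb⟩ := by
  induction m with
  | zero => simp
  | succ m ih =>
    rw [Function.iterate_succ_apply', ih, f0]
    rw [if_pos]
    · congr 1
      funext j
      simp only [Function.update_apply, Function.update_self]
      split_ifs <;> push_cast <;> first | (exfalso; omega) | ring | rfl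
    · simp only [Function.update_self]
      have : (0:ℤ) ≤ m := Int.natCast_nonneg m
      linarith

lemma flast_iter (n m : ℕ) (b : AElt) :
    (flast n)^[m] b = ⟨Function.update b.x n (b.x n - m),
                       Function.update b.xb n (b.xb n + m)⟩ := by
  induction m with
  | zero => simp
  | succ m ih =>
    rw [Function.iterate_succ_apply', ih, flast]
    congr 1 <;>
    · funext j
      simp only [Function.update_apply, Function.update_self]
      split_ifs <;> push_cast <;> first | (exfalso; omega) | ring | rfl

lemma fmid_iter_x {i : ℕ} (m : ℕ) (b : AElt) (h : b.xb (i+1) ≤ b.x (i+1)) :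
    (fmid i)^[m] b =
      ⟨Function.update (Function.update b.x i (b.x i - m)) (i+1) (b.x (i+1) + m),
       b.xb⟩ := by
  induction m with
  | zero => simp
  | succ m ih =>
    rw [Function.iterate_succ_apply', ih, fmid]
    rw [if_pos]
    · congr 1
      funext j
      simp only [Function.update_apply, Function.update_self]
      split_ifs <;> push_cast <;> first | (exfalso; omega) | ring
    · simp only [Function.update_self]
      have : (0:ℤ) ≤ m := Int.natCast_nonneg m
      linarith

lemma fmid_iter_xb {i : ℕ} (m : ℕ) (b : AElt)
    (h : ∀ k : ℕ, k < m → b.x (i+1) < b.xb (i+1) - k) :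
    (fmid i)^[m] b =
      ⟨b.x, Function.update (Function.update b.xb (i+1) (b.xb (i+1) - m)) i
              (b.xb i + m)⟩ := by
  induction m with
  | zero => simp
  | succ m ih =>
    rw [Function.iterate_succ_apply',
      ih (fun k hk => h k (by omega)), fmid]
    rw [if_neg]
    · congr 1
      funext j
      simp only [Function.update_apply, Function.update_self,
        Function.update_of_ne (by omega : i + 1 ≠ i)]
      split_ifs <;> push_cast <;> first | (exfalso; omega) | ring
    · simp only [Function.update_self,
        Function.update_of_ne (by omega : i + 1 ≠ i)]
      have := h m (by omega)
      push_neg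
      linarith


section main

variable {n l : ℕ}

def T1 (n l a : ℕ) : Set AElt :=
  {b | mem n l b ∧ (∀ i, a < i → b.x i = 0) ∧ ∀ i, b.xb i = 0}

def T2 (n l a : ℕ) : Set AElt :=
  {b | mem n l b ∧ ∀ i, i ≤ n - a → b.xb i = 0}

lemma mem_T1 {a : ℕ} {b : AElt} :
    b ∈ T1 n l a ↔ mem n l b ∧ (∀ i, a < i → b.x i = 0) ∧ ∀ i, b.xb i = 0 :=
  Iff.rfl

lemma mem_T2 {a : ℕ} {b : AElt} :
    b ∈ T2 n l a ↔ mem n l b ∧ ∀ i, i ≤ n - a → b.xb i = 0 := Iff.rfl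

lemma phi_mid {i : ℕ} (hi0 : i ≠ 0) (hin : i ≠ n) (c : AElt) :
    phi n l i c = c.x i + max (c.xb (i+1) - c.x (i+1)) 0 := by
  unfold phi; rw [if_neg hi0, if_neg hin]

lemma phi_last (hn0 : n ≠ 0) (c : AElt) : phi n l n c = c.x n := by
  unfold phi; rw [if_neg hn0, if_pos rfl]

lemma phi_zero (c : AElt) :
    phi n l 0 c = (l : ℤ) - sumA n c + 2 * max (c.xb 1 - c.x 1) 0 := by
  unfold phi; rw [if_pos rfl]

lemma iter_mem {S : Set AElt} {g : AElt → AElt} {P : AElt → Prop}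
    (hS : ∀ c ∈ S, P c → g c ∈ S) :
    ∀ m (b : AElt), b ∈ S → (∀ k, k < m → P (g^[k] b)) → g^[m] b ∈ S := by
  intro m
  induction m with
  | zero => exact fun b hb _ => hb
  | succ m ih =>
    intro b hb h
    rw [Function.iterate_succ_apply']
    exact hS _ (ih b hb fun k hk => h k (by omega)) (h m (by omega))

lemma x_le_sumA {b : AElt} (hx : ∀ i, 0 ≤ b.x i) (hxb : ∀ i, 0 ≤ b.xb i)
    {j : ℕ} (hj : j ∈ Finset.Icc 1 n) : b.x j ≤ sumA n b := by
  unfold sumA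
  calc b.x j ≤ b.x j + b.xb j := by linarith [hxb j]
  _ ≤ ∑ i ∈ Finset.Icc 1 n, (b.x i + b.xb i) :=
      Finset.single_le_sum (f := fun i => b.x i + b.xb i)
        (fun i _ => by linarith [hx i, hxb i]) hj

lemma xb_le_sumA {b : AElt} (hx : ∀ i, 0 ≤ b.x i) (hxb : ∀ i, 0 ≤ b.xb i)
    {j : ℕ} (hj : j ∈ Finset.Icc 1 n) : b.xb j ≤ sumA n b := by
  unfold sumA
  calc b.xb j ≤ b.x j + b.xb j := by linarith [hx j]
  _ ≤ ∑ i ∈ Finset.Icc 1 n, (b.x i + b.xb i) :=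
      Finset.single_le_sum (f := fun i => b.x i + b.xb i)
        (fun i _ => by linarith [hx i, hxb i]) hj

lemma T1_closed (hn : 2 ≤ n) {a : ℕ} (ha1 : 1 ≤ a) (ha2 : a + 1 ≤ n) {c : AElt}
    (hc : c ∈ T1 n l (a+1)) (hφ : 0 < phi n l a c) :
    fmid a c ∈ T1 n l (a+1) := by
  obtain ⟨⟨hx, hxb, hsupp, hsum⟩, hhigh, hzb⟩ := hc
  have hcond : c.xb (a+1) ≤ c.x (a+1) := by rw [hzb]; exact hx _
  rw [phi_mid (by omega) (by omega),
    max_eq_right (by linarith [hx (a+1), hxb (a+1)])] at hφ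
  rw [fmid, if_pos hcond]
  refine ⟨⟨?_, hxb, ?_, ?_⟩, ?_, hzb⟩
  · intro j
    simp only [Function.update_apply]
    split_ifs <;> [linarith [hx (a+1)]; linarith; exact hx j]
  · intro j hj
    simp only [Function.update_apply]
    rw [if_neg (by rcases hj with hj|hj <;> omega),
      if_neg (by rcases hj with hj|hj <;> omega)]
    exact hsupp j hj
  · rw [sumA_split]
    simp only [mk_x, mk_xb]
    rw [sum_update2 _ (by omega) (Finset.mem_Icc.mpr ⟨by omega, by omega⟩)
      (Finset.mem_Icc.mpr ⟨by omega, by omega⟩)]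
    rw [sumA_split] at hsum
    linarith
  · intro j hj
    simp only [Function.update_apply]
    rw [if_neg (by omega), if_neg (by omega)]
    exact hhigh j (by omega)

lemma L1 (hn : 2 ≤ n) (hl : 1 ≤ l) :
    ∀ a, 1 ≤ a → a ≤ n → BSet n l a = T1 n l a := by
  intro a
  induction a with
  | zero => omega
  | succ a ih =>
    intro _ han
    have h1n : (1:ℕ) ∈ Finset.Icc 1 n := Finset.mem_Icc.mpr ⟨le_rfl, by omega⟩
    rcases Nat.eq_zero_or_pos a with rfl | ha1
    · -- base case: BSet n l 1 = T1 n l 1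
      have hidx : idx n 1 = 0 := by rw [idx, if_pos (by omega)]
      have hf : f n 0 = f0 := by funext b; rw [f, if_pos rfl]
      have hzz : bzero.xb 1 ≤ bzero.x 1 := le_rfl
      have hstate : ∀ m : ℕ, f0^[m] bzero =
          (⟨Function.update bzero.x 1 ((m : ℤ)), bzero.xb⟩ : AElt) := by
        intro m
        rw [f0_iter m bzero hzz]
        refine AElt.ext' ?_ rfl
        funext j
        simp only [bzero, Function.update_apply]
        split_ifs <;> [ring; rfl]
      have hsum : ∀ m : ℕ, sumA n (f0^[m] bzero) = m := by
        intro m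
        rw [hstate m, sumA_split]
        simp only [mk_x, mk_xb]
        rw [sum_update1 _ h1n]
        simp [bzero]
      have hφval : ∀ m : ℕ, phi n l 0 (f0^[m] bzero) = (l : ℤ) - m := by
        intro m
        rw [phi_zero, hsum m, hstate m]
        simp only [mk_x, mk_xb, bzero, Function.update_self]
        rw [max_eq_right (by omega)]
        ring
      ext c
      simp only [BSet, hidx, hf, Set.mem_singleton_iff, Set.mem_setOf_eq, mem_T1]
      constructor
      · rintro ⟨b, rfl, m, hφ, rfl⟩
        have hml : (m : ℤ) ≤ l := by
          rcases Nat.eq_zero_or_pos m with rfl | hm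
          · omega
          · have h1 := hφ (m-1) (by omega)
            rw [hφval (m-1)] at h1
            omega
        rw [hstate m]
        refine ⟨⟨?_, fun j => le_rfl, ?_, ?_⟩, ?_, fun j => rfl⟩
        · intro j
          simp only [bzero, Function.update_apply]
          split_ifs <;> positivity
        · intro j hj
          refine ⟨?_, rfl⟩
          simp only [bzero, Function.update_apply]
          rw [if_neg (by rcases hj with hj|hj <;> omega)]

        · have := hsum m
          rw [hstate m] at this
          rw [this]
          exact hml
        · intro j hj
          simp only [bzero, Function.update_apply]
          rw [if_neg (by omega)]
      · rintro ⟨⟨hx, hxb, hsupp, hsum'⟩, hhigh, hzb⟩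
        refine ⟨bzero, rfl, (c.x 1).toNat, ?_, ?_⟩
        · intro k hk
          rw [hφval k]
          have h1 : c.x 1 ≤ sumA n c := x_le_sumA hx hxb h1n
          have h2 : (k : ℤ) < c.x 1 := Int.lt_toNat.mp hk
          linarith
        · rw [hstate]
          refine AElt.ext' ?_ ?_
          · funext j
            simp only [bzero, Function.update_apply]
            split_ifs with h
            · subst h
              rw [Int.toNat_of_nonneg (hx 1)]
            · rcases Nat.eq_zero_or_pos j with rfl | hj
              · exact (hsupp 0 (Or.inl rfl)).1
              · exact hhigh j (by omega)
          · funext j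
            exact hzb j
    · -- step case: 2 ≤ a+1 ≤ n
      have hBa := ih ha1 (by omega)
      have hidx : idx n (a+1) = a := by rw [idx, if_pos (by omega)]; omega
      have hf : f n a = fmid a := by
        funext b; rw [f, if_neg (by omega), if_neg (by omega)]
      have hIcc : ∀ j : ℕ, 1 ≤ j → j ≤ n → j ∈ Finset.Icc 1 n :=
        fun j h1 h2 => Finset.mem_Icc.mpr ⟨h1, h2⟩
      ext c
      simp only [BSet, hidx, hf, Set.mem_setOf_eq]
      constructor
      · rintro ⟨b, hb, m, hφ, rfl⟩
        rw [hBa] at hb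
        have hsub : b ∈ T1 n l (a+1) :=
          ⟨hb.1, fun i hi => hb.2.1 i (by omega), hb.2.2⟩
        exact iter_mem (P := fun c => 0 < phi n l a c)
          (fun c hc hp => T1_closed hn ha1 han hc hp) m b hsub hφ
      · rintro ⟨⟨hx, hxb, hsupp, hsum⟩, hhigh, hzb⟩
        have hmc : (((c.x (a+1)).toNat : ℕ) : ℤ) = c.x (a+1) :=
          Int.toNat_of_nonneg (hx _)
        set m := (c.x (a+1)).toNat with hm
        obtain ⟨b, hbdef⟩ : ∃ b : AElt,
            b = ⟨Function.update (Function.update c.x (a+1) 0) a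
              (c.x a + c.x (a+1)), c.xb⟩ := ⟨_, rfl⟩
        have hbxA : b.x a = c.x a + c.x (a+1) := by
          rw [hbdef]; simp only [mk_x]; rw [Function.update_self]
        have hbxA1 : b.x (a+1) = 0 := by
          rw [hbdef]; simp only [mk_x]
          rw [Function.update_of_ne (by omega), Function.update_self]
        have hbxb : b.xb = c.xb := by rw [hbdef]
        have hbxj : ∀ j, j ≠ a → j ≠ a+1 → b.x j = c.x j := by
          intro j h1 h2
          rw [hbdef]; simp only [mk_x]
          rw [Function.update_of_ne h1, Function.update_of_ne h2]
        have hcond : b.xb (a+1) ≤ b.x (a+1) := by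
          rw [hbxb, hbxA1, hzb]
        refine ⟨b, ?_, m, ?_, ?_⟩
        · rw [hBa]
          refine ⟨⟨?_, ?_, ?_, ?_⟩, ?_, ?_⟩
          · intro j
            rcases eq_or_ne j a with rfl | h1
            · rw [hbxA]; linarith [hx j, hx (j+1)]
            · rcases eq_or_ne j (a+1) with rfl | h2
              · rw [hbxA1]
              · rw [hbxj j h1 h2]; exact hx j
          · intro j; rw [hbxb]; exact hxb j
          · intro j hj
            have h1 : j ≠ a := by rcases hj with hj|hj <;> omega
            have h2 : j ≠ a+1 := by rcases hj with hj|hj <;> omega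
            exact ⟨by rw [hbxj j h1 h2]; exact (hsupp j hj).1,
              by rw [hbxb]; exact (hsupp j hj).2⟩
          · have : sumA n b = sumA n c := by
              rw [hbdef, sumA_split, sumA_split]
              simp only [mk_x, mk_xb]
              rw [sum_update2 _ (by omega)
                (hIcc (a+1) (by omega) (by omega)) (hIcc a (by omega) (by omega))]
              ring
            rw [this]; exact hsum
          · intro j hj
            rcases eq_or_ne j (a+1) with rfl | h2
            · exact hbxA1
            · rw [hbxj j (by omega) h2]; exact hhigh j (by omega)
          · intro j; rw [hbxb]; exact hzb j
        · intro k hk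
          rw [fmid_iter_x k b hcond, phi_mid (by omega) (by omega)]
          simp only [mk_x, mk_xb]
          rw [Function.update_of_ne (show a ≠ a + 1 by omega),
            Function.update_self, Function.update_self]
          rw [hbxA, hbxA1, hbxb, hzb]
          rw [max_eq_right (by omega)]
          have hkm : (k : ℤ) < (m : ℤ) := by exact_mod_cast hk
          linarith [hx a]
        · rw [fmid_iter_x m b hcond]
          refine AElt.ext' ?_ hbxb.symm
          funext j
          simp only [mk_x, Function.update_apply]
          split_ifs with h1 h2
          · subst h1; rw [hbxA1, ← hmc]; ring
          · subst h2; rw [hbxA, ← hmc]; ring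
          · exact (hbxj j h2 h1).symm

lemma T2one_closed (hn : 2 ≤ n) {c : AElt} (hc : c ∈ T2 n l 1)
    (hφ : 0 < phi n l n c) : flast n c ∈ T2 n l 1 := by
  obtain ⟨⟨hx, hxb, hsupp, hsum⟩, hzb⟩ := hc
  rw [phi_last (by omega)] at hφ
  rw [flast]
  refine ⟨⟨?_, ?_, ?_, ?_⟩, ?_⟩
  · intro j
    simp only [mk_x, Function.update_apply]
    split_ifs <;> [linarith; exact hx j]
  · intro j
    simp only [mk_xb, Function.update_apply]
    split_ifs <;> [linarith [hxb n]; exact hxb j]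
  · intro j hj
    have h1 : j ≠ n := by rcases hj with hj|hj <;> omega
    simp only [mk_x, mk_xb, Function.update_apply, if_neg h1]
    exact hsupp j hj
  · have hnI : n ∈ Finset.Icc 1 n := Finset.mem_Icc.mpr ⟨by omega, le_rfl⟩
    rw [sumA_split]
    simp only [mk_x, mk_xb]
    rw [sum_update1 _ hnI, sum_update1 _ hnI]
    rw [sumA_split] at hsum
    linarith
  · intro j hj
    simp only [mk_xb, Function.update_apply, if_neg (show j ≠ n by omega)]
    exact hzb j hj

lemma T2_closed (hn : 2 ≤ n) {a : ℕ} (ha1 : 1 ≤ a) (ha2 : a + 1 ≤ n) {c : AElt}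
    (hc : c ∈ T2 n l (a+1)) (hφ : 0 < phi n l (n-a) c) :
    fmid (n-a) c ∈ T2 n l (a+1) := by
  obtain ⟨⟨hx, hxb, hsupp, hsum⟩, hzb⟩ := hc
  set i := n - a with hi
  have hi1 : 1 ≤ i := by omega
  have hi2 : i + 1 ≤ n := by omega
  have hiI : i ∈ Finset.Icc 1 n := Finset.mem_Icc.mpr ⟨by omega, by omega⟩
  have hi1I : i + 1 ∈ Finset.Icc 1 n := Finset.mem_Icc.mpr ⟨by omega, by omega⟩
  rw [phi_mid (by omega) (by omega)] at hφ
  rw [fmid]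
  split_ifs with hcond
  · rw [max_eq_right (by linarith)] at hφ
    refine ⟨⟨?_, hxb, ?_, ?_⟩, ?_⟩
    · intro j
      simp only [mk_x, Function.update_apply]
      split_ifs <;> [linarith [hx (i+1)]; linarith; exact hx j]
    · intro j hj
      have h1 : j ≠ i + 1 := by rcases hj with hj|hj <;> omega
      have h2 : j ≠ i := by rcases hj with hj|hj <;> omega
      simp only [mk_x, mk_xb, Function.update_apply, if_neg h1, if_neg h2]
      exact hsupp j hj
    · rw [sumA_split]
      simp only [mk_x, mk_xb]
      rw [sum_update2 _ (by omega) hiI hi1I]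
      rw [sumA_split] at hsum
      linarith
    · intro j hj
      simp only [mk_xb]
      exact hzb j hj
  · push_neg at hcond
    refine ⟨⟨hx, ?_, ?_, ?_⟩, ?_⟩
    · intro j
      simp only [mk_xb, Function.update_apply]
      split_ifs <;> [linarith [hxb i]; linarith [hx (i+1)]; exact hxb j]
    · intro j hj
      have h1 : j ≠ i := by rcases hj with hj|hj <;> omega
      have h2 : j ≠ i + 1 := by rcases hj with hj|hj <;> omega
      simp only [mk_x, mk_xb, Function.update_apply, if_neg h1, if_neg h2]
      exact hsupp j hj
    · rw [sumA_split]
      simp only [mk_x, mk_xb]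
      rw [sum_update2 _ (by omega) hi1I hiI]
      rw [sumA_split] at hsum
      linarith
    · intro j hj
      have h1 : j ≠ i := by omega
      have h2 : j ≠ i + 1 := by omega
      simp only [mk_xb, Function.update_apply, if_neg h1, if_neg h2]
      exact hzb j hj

lemma L2 (hn : 2 ≤ n) (hl : 1 ≤ l) :
    ∀ a, 1 ≤ a → a ≤ n → BSet n l (n + a) = T2 n l a := by
  intro a
  induction a with
  | zero => omega
  | succ a ih =>
    intro _ han
    rcases Nat.eq_zero_or_pos a with rfl | ha1
    · -- base case: BSet n l (n+1) = T2 n l 1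
      have hT1n := L1 hn hl n (by omega) le_rfl
      have hidx : idx n (n+1) = n := by rw [idx, if_pos (by omega)]; omega
      have hf : f n n = flast n := by
        funext b; rw [f, if_neg (by omega), if_pos rfl]
      have hnI : n ∈ Finset.Icc 1 n := Finset.mem_Icc.mpr ⟨by omega, le_rfl⟩
      ext c
      rw [show n + 1 = (n + 0) + 1 by omega]
      simp only [BSet, hidx, hf, Set.mem_setOf_eq]
      constructor
      · rintro ⟨b, hb, m, hφ, rfl⟩
        rw [hT1n] at hb
        have hsub : b ∈ T2 n l 1 := ⟨hb.1, fun j _ => hb.2.2 j⟩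
        exact iter_mem (P := fun c => 0 < phi n l n c)
          (fun c hc hp => T2one_closed hn hc hp) m b hsub hφ
      · rintro ⟨⟨hx, hxb, hsupp, hsum⟩, hzb⟩
        have hmc : (((c.xb n).toNat : ℕ) : ℤ) = c.xb n :=
          Int.toNat_of_nonneg (hxb _)
        set m := (c.xb n).toNat with hm
        obtain ⟨b, hbdef⟩ : ∃ b : AElt,
            b = ⟨Function.update c.x n (c.x n + c.xb n),
                 Function.update c.xb n 0⟩ := ⟨_, rfl⟩
        have hbxn : b.x n = c.x n + c.xb n := by
          rw [hbdef]; simp only [mk_x]; rw [Function.update_self]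
        have hbxbn : b.xb n = 0 := by
          rw [hbdef]; simp only [mk_xb]; rw [Function.update_self]
        have hbxj : ∀ j, j ≠ n → b.x j = c.x j := by
          intro j h1
          rw [hbdef]; simp only [mk_x]; rw [Function.update_of_ne h1]
        have hbxbj : ∀ j, j ≠ n → b.xb j = c.xb j := by
          intro j h1
          rw [hbdef]; simp only [mk_xb]; rw [Function.update_of_ne h1]
        refine ⟨b, ?_, m, ?_, ?_⟩
        · rw [hT1n]
          refine ⟨⟨?_, ?_, ?_, ?_⟩, ?_, ?_⟩
          · intro j
            rcases eq_or_ne j n with h1 | h1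
            · rw [h1, hbxn]; linarith [hx n, hxb n]
            · rw [hbxj j h1]; exact hx j
          · intro j
            rcases eq_or_ne j n with h1 | h1
            · rw [h1, hbxbn]
            · rw [hbxbj j h1]; exact hxb j
          · intro j hj
            have h1 : j ≠ n := by rcases hj with hj|hj <;> omega
            exact ⟨by rw [hbxj j h1]; exact (hsupp j hj).1,
              by rw [hbxbj j h1]; exact (hsupp j hj).2⟩
          · have : sumA n b = sumA n c := by
              rw [hbdef, sumA_split, sumA_split]
              simp only [mk_x, mk_xb]
              rw [sum_update1 _ hnI, sum_update1 _ hnI]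
              ring
            rw [this]; exact hsum
          · intro j hj
            rw [hbxj j (by omega)]
            exact (hsupp j (Or.inr hj)).1
          · intro j
            rcases eq_or_ne j n with h1 | h1
            · rw [h1]; exact hbxbn
            · rw [hbxbj j h1]
              rcases Nat.lt_or_ge j n with h | h
              · exact hzb j (by omega)
              · exact (hsupp j (Or.inr (by omega))).2
        · intro k hk
          rw [flast_iter n k b, phi_last (by omega)]
          simp only [mk_x]
          rw [Function.update_self, hbxn]
          have hkm : (k : ℤ) < (m : ℤ) := by exact_mod_cast hk
          linarith [hx n]
        · rw [flast_iter n m b]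
          refine AElt.ext' ?_ ?_
          · funext j
            simp only [mk_x, Function.update_apply]
            split_ifs with h1
            · subst h1; rw [hbxn, ← hmc]; ring
            · exact (hbxj j h1).symm
          · funext j
            simp only [mk_xb, Function.update_apply]
            split_ifs with h1
            · subst h1; rw [hbxbn, ← hmc]; ring
            · exact (hbxbj j h1).symm
    · -- step case: 1 ≤ a, a + 1 ≤ n
      have hprev := ih ha1 (by omega)
      set i := n - a with hi
      have hi1 : 1 ≤ i := by omega
      have hi2 : i + 1 ≤ n := by omega
      have hiI : i ∈ Finset.Icc 1 n := Finset.mem_Icc.mpr ⟨by omega, by omega⟩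
      have hi1I : i + 1 ∈ Finset.Icc 1 n := Finset.mem_Icc.mpr ⟨by omega, by omega⟩
      have hidx : idx n (n + a + 1) = i := by
        rw [idx, if_neg (by omega)]; omega
      have hf : f n i = fmid i := by
        funext b; rw [f, if_neg (by omega), if_neg (by omega)]
      ext c
      rw [show n + (a + 1) = (n + a) + 1 by omega]
      simp only [BSet, hidx, hf, Set.mem_setOf_eq]
      constructor
      · rintro ⟨b, hb, m, hφ, rfl⟩
        rw [hprev] at hb
        have hsub : b ∈ T2 n l (a+1) := ⟨hb.1, fun j hj => hb.2 j (by omega)⟩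
        exact iter_mem (P := fun c => 0 < phi n l i c)
          (fun c hc hp => T2_closed hn ha1 han hc hp) m b hsub hφ
      · rintro ⟨⟨hx, hxb, hsupp, hsum⟩, hzb⟩
        set p := min (c.x (i+1)) (c.xb (i+1)) with hp
        have hp1 : p ≤ c.x (i+1) := min_le_left _ _
        have hp2 : p ≤ c.xb (i+1) := min_le_right _ _
        have hp0 : 0 ≤ p := le_min (hx _) (hxb _)
        have huc : (((c.xb i).toNat : ℕ) : ℤ) = c.xb i :=
          Int.toNat_of_nonneg (hxb _)
        have hvc : (((c.x (i+1) - p).toNat : ℕ) : ℤ) = c.x (i+1) - p :=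
          Int.toNat_of_nonneg (by linarith)
        set u := (c.xb i).toNat with hu
        set v := (c.x (i+1) - p).toNat with hv
        obtain ⟨b, hbdef⟩ : ∃ b : AElt,
            b = ⟨Function.update (Function.update c.x (i+1) p) i
                   (c.x i + (c.x (i+1) - p)),
                 Function.update (Function.update c.xb i 0) (i+1)
                   (c.xb (i+1) + c.xb i)⟩ := ⟨_, rfl⟩
        have hbxi : b.x i = c.x i + (c.x (i+1) - p) := by
          rw [hbdef]; simp only [mk_x]; rw [Function.update_self]
        have hbxi1 : b.x (i+1) = p := by
          rw [hbdef]; simp only [mk_x]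
          rw [Function.update_of_ne (by omega), Function.update_self]
        have hbxj : ∀ j, j ≠ i → j ≠ i+1 → b.x j = c.x j := by
          intro j h1 h2
          rw [hbdef]; simp only [mk_x]
          rw [Function.update_of_ne h1, Function.update_of_ne h2]
        have hbxbi : b.xb i = 0 := by
          rw [hbdef]; simp only [mk_xb]
          rw [Function.update_of_ne (by omega), Function.update_self]
        have hbxbi1 : b.xb (i+1) = c.xb (i+1) + c.xb i := by
          rw [hbdef]; simp only [mk_xb]; rw [Function.update_self]
        have hbxbj : ∀ j, j ≠ i → j ≠ i+1 → b.xb j = c.xb j := by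
          intro j h1 h2
          rw [hbdef]; simp only [mk_xb]
          rw [Function.update_of_ne h2, Function.update_of_ne h1]
        -- phase 1 condition
        have hcond1 : ∀ k : ℕ, k < u → b.x (i+1) < b.xb (i+1) - k := by
          intro k hk
          have hkm : (k : ℤ) < (u : ℤ) := by exact_mod_cast hk
          rw [hbxi1, hbxbi1]
          linarith [huc]
        -- phase 1 result
        have hphase1 : (fmid i)^[u] b = ⟨b.x, c.xb⟩ := by
          rw [fmid_iter_xb u b hcond1]
          refine AElt.ext' rfl ?_
          funext j
          simp only [mk_xb, Function.update_apply]
          split_ifs with h1 h2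
          · subst h1; rw [hbxbi]; linarith [huc]
          · subst h2; rw [hbxbi1]; linarith [huc]
          · exact hbxbj j h1 h2
        -- positivity during phase 1
        have hφ1 : ∀ k : ℕ, k < u → 0 < phi n l i ((fmid i)^[k] b) := by
          intro k hk
          rw [fmid_iter_xb k b (fun k' hk' => hcond1 k' (by omega)),
            phi_mid (by omega) (by omega)]
          simp only [mk_x, mk_xb]
          rw [Function.update_of_ne (show i + 1 ≠ i by omega),
            Function.update_self]
          have harg : 0 < b.xb (i+1) - k - b.x (i+1) := by
            have := hcond1 k hk
            linarith
          have hmax := le_max_left (b.xb (i+1) - (k:ℤ) - b.x (i+1)) (0:ℤ)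
          have hbge : 0 ≤ b.x i := by
            rw [hbxi]; linarith [hx i]
          calc (0:ℤ) < b.xb (i+1) - k - b.x (i+1) := harg
          _ ≤ max (b.xb (i+1) - k - b.x (i+1)) 0 := hmax
          _ ≤ b.x i + max (b.xb (i+1) - k - b.x (i+1)) 0 := by linarith
        -- membership of b in previous set
        have hbmem : b ∈ BSet n l (n + a) := by
          rw [hprev]
          refine ⟨⟨?_, ?_, ?_, ?_⟩, ?_⟩
          · intro j
            rcases eq_or_ne j i with h1 | h1
            · rw [h1, hbxi]; linarith [hx i, hp1]
            · rcases eq_or_ne j (i+1) with h2 | h2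
              · rw [h2, hbxi1]; exact hp0
              · rw [hbxj j h1 h2]; exact hx j
          · intro j
            rcases eq_or_ne j i with h1 | h1
            · rw [h1, hbxbi]
            · rcases eq_or_ne j (i+1) with h2 | h2
              · rw [h2, hbxbi1]; linarith [hxb (i+1), hxb i]
              · rw [hbxbj j h1 h2]; exact hxb j
          · intro j hj
            have h1 : j ≠ i := by rcases hj with hj|hj <;> omega
            have h2 : j ≠ i+1 := by rcases hj with hj|hj <;> omega
            exact ⟨by rw [hbxj j h1 h2]; exact (hsupp j hj).1,
              by rw [hbxbj j h1 h2]; exact (hsupp j hj).2⟩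
          · have : sumA n b = sumA n c := by
              rw [hbdef, sumA_split, sumA_split]
              simp only [mk_x, mk_xb]
              rw [sum_update2 _ (by omega) hi1I hiI,
                sum_update2 _ (by omega) hiI hi1I]
              ring
            rw [this]; exact hsum
          · intro j hj
            rcases eq_or_ne j i with h1 | h1
            · rw [h1]; exact hbxbi
            · rw [hbxbj j h1 (by omega)]
              exact hzb j (by omega)
        -- now split on whether phase 2 is trivial
        rcases Nat.eq_zero_or_pos v with hv0 | hvpos
        · -- v = 0 : p = c.x (i+1), m = u suffices
          have hpx : p = c.x (i+1) := by
            have : ((v:ℕ) : ℤ) = c.x (i+1) - p := hvc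
            rw [hv0] at this
            push_cast at this
            linarith
          refine ⟨b, hbmem, u, hφ1, ?_⟩
          rw [hphase1]
          refine AElt.ext' ?_ rfl
          funext j
          simp only [mk_x]
          rcases eq_or_ne j i with h1 | h1
          · rw [h1, hbxi, ← hpx]; ring
          · rcases eq_or_ne j (i+1) with h2 | h2
            · rw [h2, hbxi1, hpx]
            · exact (hbxj j h1 h2).symm
        · -- v > 0 : p = c.xb (i+1)
          have hpxb : p = c.xb (i+1) := by
            rcases min_cases (c.x (i+1)) (c.xb (i+1)) with ⟨h1, h2⟩ | ⟨h1, h2⟩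
            · exfalso
              have hz : c.x (i+1) - p = 0 := by rw [hp, h1]; ring
              rw [hv, hz] at hvpos
              simp at hvpos
            · rw [hp, h1]
          have hcond2 : (⟨b.x, c.xb⟩ : AElt).xb (i+1) ≤ (⟨b.x, c.xb⟩ : AElt).x (i+1) := by
            simp only [mk_x, mk_xb]
            rw [hbxi1, ← hpxb]
          refine ⟨b, hbmem, v + u, ?_, ?_⟩
          · intro k hk
            rcases Nat.lt_or_ge k u with hku | hku
            · exact hφ1 k hku
            · rw [show k = (k - u) + u by omega, Function.iterate_add_apply,
                hphase1, fmid_iter_x (k - u) _ hcond2, phi_mid (by omega) (by omega)]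
              simp only [mk_x, mk_xb]
              rw [Function.update_of_ne (show i ≠ i + 1 by omega),
                Function.update_self, Function.update_self]
              rw [hbxi, hbxi1, ← hpxb]
              rw [max_eq_right (by linarith [Int.natCast_nonneg (k - u)])]
              have hkuv : ((k - u : ℕ) : ℤ) < (v : ℤ) := by
                have hlt : k - u < v := by omega
                exact_mod_cast hlt
              linarith [hx i, hvc]
          · rw [Function.iterate_add_apply, hphase1, fmid_iter_x v _ hcond2]
            refine AElt.ext' ?_ rfl
            funext j
            simp only [mk_x, Function.update_apply]
            split_ifs with h1 h2
            · subst h1; rw [hbxi1]; linarith [hvc]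
            · subst h2; rw [hbxi]; linarith [hvc]
            · exact (hbxj j h2 h1).symm
end main
end A2n2aux


/-- in the `A_{2n}^{(2)}` perfect crystal of level `l`, the
recursively defined sets satisfy `B_a = {(x_1,…,x_a,0,…,0)}` for `1 ≤ a ≤ n`,
`B_{n+a} = {(x_1,…,x_n,x̄_n,…,x̄_{n-a+1},0,…,0)}` for `1 ≤ a ≤ n-1`, and
`B_{2n} = B`. -/
theorem A2n2_Demazure_subsets (n l : ℕ) (hn : 2 ≤ n) (hl : 1 ≤ l) :
    (∀ a, 1 ≤ a → a ≤ n →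
      AElt.BSet n l a =
        {b | AElt.mem n l b ∧ (∀ i, a < i → b.x i = 0) ∧ ∀ i, b.xb i = 0}) ∧
    (∀ a, 1 ≤ a → a ≤ n - 1 →
      AElt.BSet n l (n + a) =
        {b | AElt.mem n l b ∧ ∀ i, i ≤ n - a → b.xb i = 0}) ∧
    AElt.BSet n l (2 * n) = {b | AElt.mem n l b} := by
  refine ⟨fun a ha1 ha2 => A2n2aux.L1 hn hl a ha1 ha2,
    fun a ha1 ha2 => A2n2aux.L2 hn hl a ha1 (by omega), ?_⟩
  have h2 := A2n2aux.L2 hn hl n (by omega) le_rfl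
  rw [two_mul, h2]
  ext b
  simp only [A2n2aux.T2, Set.mem_setOf_eq]
  constructor
  · exact fun h => h.1
  · intro hb
    refine ⟨hb, fun j hj => ?_⟩
    have hj0 : j = 0 := by omega
    rw [hj0]
    exact (hb.2.2.1 0 (Or.inl rfl)).2
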